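/- Let n be even and let P be a bichromatic convex point set with n red and n blue points whose coloring is alternating. Then P admits a straight-line bichromatic perfect matching with exactly n(n−2)/2 crossings; in particular, the matching that pairs p_i with p_{i+n+1} for even i with 0 ≤ i ≤ n−1 and pairs p_i with p_{i+n−1} for odd i with 0 ≤ i ≤ n−1 is such a matching. -/

import Mathlib

open Finset



/-- Two closed-segment edges cross: their open segments (relative interiors) intersect. -/
def SegCross (a b c d : ℝ × ℝ) : Prop :=
  ∃ x : ℝ × ℝ, x ∈ openSegment ℝ a b ∧ x ∈ openSegment ℝ c d

/-- `f` is a straight-line bichromatic perfect matching on points indexed by `Fin m`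
with coloring `c` (`true` = red, `false` = blue): it is a fixed-point-free involution
matching points of different colors. -/
def IsBPM (m : ℕ) (c : Fin m → Bool) (f : Fin m → Fin m) : Prop :=
  Function.Involutive f ∧ (∀ i, f i ≠ i) ∧ (∀ i, c (f i) ≠ c i)

/-- Number of crossing pairs of edges of the matching `f` on the points `p`:
each edge is represented by its smaller endpoint. -/
noncomputable def crNum (m : ℕ) (p : Fin m → ℝ × ℝ) (f : Fin m → Fin m) : ℕ :=
  Nat.card {q : Fin m × Fin m // q.1 < q.2 ∧ q.1 < f q.1 ∧ q.2 < f q.2 ∧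
    SegCross (p q.1) (p (f q.1)) (p q.2) (p (f q.2))}

/-- The points `p 0, p 1, …` are distinct and in strictly convex position,
listed in clockwise order (every triple is negatively oriented). -/
def ConvexCW (m : ℕ) (p : Fin m → ℝ × ℝ) : Prop :=
  Function.Injective p ∧
  ∀ i j k : Fin m, (i : ℕ) < (j : ℕ) → (j : ℕ) < (k : ℕ) →
    ((p j).1 - (p i).1) * ((p k).2 - (p i).2) -
      ((p j).2 - (p i).2) * ((p k).1 - (p i).1) < 0

/-- The points are distinct and in general position: no three collinear. -/
def GenPos (m : ℕ) (p : Fin m → ℝ × ℝ) : Prop :=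
  Function.Injective p ∧
  ∀ i j k : Fin m, i ≠ j → i ≠ k → j ≠ k →
    ¬ Collinear ℝ ({p i, p j, p k} : Set (ℝ × ℝ))

/-- The coloring has exactly `n` red points (hence `n` blue points among the `2n`). -/
def Bichrom (n : ℕ) (c : Fin (2 * n) → Bool) : Prop :=
  (Finset.univ.filter fun i : Fin (2 * n) => c i = true).card = n

/-- The coloring alternates along the (cyclic) convex hull order. -/
def Alternating (m : ℕ) (c : Fin m → Bool) : Prop :=
  ∀ i j : Fin m, (j : ℕ) = ((i : ℕ) + 1) % m → c j ≠ c i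

/-- The coloring is a 4-block coloring: starting at position `t` along the cyclic order,
there come `r1` red points, then `b1` blue, then `r2` red, then `b2` blue,
all four blocks nonempty. -/
def FourBlockAt (n : ℕ) (c : Fin (2 * n) → Bool) (t : Fin (2 * n))
    (r1 b1 r2 b2 : ℕ) : Prop :=
  0 < r1 ∧ 0 < b1 ∧ 0 < r2 ∧ 0 < b2 ∧
  r1 + b1 + r2 + b2 = 2 * n ∧ r1 + r2 = n ∧
  ∀ j : Fin (2 * n), c (t + j) =
    if (j : ℕ) < r1 then true
    else if (j : ℕ) < r1 + b1 then false
    else if (j : ℕ) < r1 + b1 + r2 then true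
    else false

/-- The coloring is a 4-block coloring (for some start and block sizes). -/
def FourBlock (n : ℕ) (c : Fin (2 * n) → Bool) : Prop :=
  ∃ t r1 b1 r2 b2, FourBlockAt n c t r1 b1 r2 b2

/-- The coloring is a balanced 4-block coloring: any two block sizes differ by at most 1. -/
def Balanced4 (n : ℕ) (c : Fin (2 * n) → Bool) : Prop :=
  ∃ t r1 b1 r2 b2, FourBlockAt n c t r1 b1 r2 b2 ∧
    ∀ x ∈ [r1, b1, r2, b2], ∀ y ∈ [r1, b1, r2, b2], x ≤ y + 1

/-- The value `3n²/8 − n/2 + c` with `c` depending on `n mod 4`. -/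
def maxCrBound (n : ℕ) : ℚ :=
  3 * (n : ℚ) ^ 2 / 8 - (n : ℚ) / 2 +
    (if n % 4 = 0 then 0 else if n % 4 = 2 then -(1 / 2 : ℚ) else 1 / 8)

/-- `i` and `j` lie in the same monochromatic block: there is a cyclic arc from `i` to
`j` consisting of points of the color of `i`. -/
def SameBlockArc (m : ℕ) (c : Fin m → Bool) (i j : Fin m) : Prop :=
  ∃ d : Fin m, j = i + d ∧ ∀ e : Fin m, e ≤ d → c (i + e) = c i


section Stmt9Aux


/-- signed area form -/
def sgn2 (A B X : ℝ × ℝ) : ℝ :=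
  (B.1 - A.1) * (X.2 - A.2) - (B.2 - A.2) * (X.1 - A.1)


lemma sgn2_comb (A B X Y : ℝ × ℝ) (u v : ℝ) (huv : u + v = 1) :
    sgn2 A B (u • X + v • Y) = u * sgn2 A B X + v * sgn2 A B Y := by
  have hv : v = 1 - u := by linarith
  subst hv
  simp only [sgn2, Prod.fst_add, Prod.snd_add, Prod.smul_fst, Prod.smul_snd, smul_eq_mul]
  ring

lemma sgn2_self_left (A B : ℝ × ℝ) : sgn2 A B A = 0 := by unfold sgn2; ring

lemma sgn2_self_right (A B : ℝ × ℝ) : sgn2 A B B = 0 := by unfold sgn2; ring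

lemma no_cross_same_side {A B C D : ℝ × ℝ} (h : 0 < sgn2 A B C * sgn2 A B D) :
    ¬ SegCross A B C D := by
  rintro ⟨x, hx1, hx2⟩
  obtain ⟨u, v, hu, hv, huv, rfl⟩ := hx1
  obtain ⟨u', v', hu', hv', huv', hx⟩ := hx2
  have h1 : sgn2 A B (u • A + v • B) = 0 := by
    rw [sgn2_comb A B A B u v huv, sgn2_self_left, sgn2_self_right]; ring
  have h2 : sgn2 A B (u' • C + v' • D) = u' * sgn2 A B C + v' * sgn2 A B D :=
    sgn2_comb A B C D u' v' huv'
  rw [hx] at h2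
  rw [h1] at h2
  rcases mul_pos_iff.mp h with ⟨ha, hb⟩ | ⟨ha, hb⟩ <;> nlinarith

lemma cross_of_opp {A B C D : ℝ × ℝ} (hAB : A ≠ B)
    (h1 : sgn2 A B C * sgn2 A B D < 0) (h2 : sgn2 C D A * sgn2 C D B < 0) :
    SegCross A B C D := by
  set sC := sgn2 A B C with hsC
  set sD := sgn2 A B D with hsD
  have hne : sC - sD ≠ 0 := by
    intro h
    have hd : sD = sC := by linarith
    rw [hd] at h1
    nlinarith [sq_nonneg sC]
  set lam : ℝ := sC / (sC - sD) with hlam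
  have hcompl : 1 - lam = (-sD) / (sC - sD) := by
    rw [hlam]; field_simp; ring
  have hl0 : 0 < lam ∧ lam < 1 := by
    rcases mul_neg_iff.mp h1 with ⟨hp, hq⟩ | ⟨hp, hq⟩
    · exact ⟨div_pos hp (by linarith), (div_lt_one (by linarith)).mpr (by linarith)⟩
    · have ha : 0 < lam := div_pos_iff.mpr (Or.inr ⟨hp, by linarith⟩)
      have hb : 0 < 1 - lam := by
        rw [hcompl]
        exact div_pos_iff.mpr (Or.inr ⟨by linarith, by linarith⟩)
      exact ⟨ha, by linarith⟩
  set x : ℝ × ℝ := (1 - lam) • C + lam • D with hxdef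
  have hxCD : x ∈ openSegment ℝ C D := ⟨1 - lam, lam, by linarith [hl0.2], hl0.1, by ring, rfl⟩
  have hsx : sgn2 A B x = 0 := by
    rw [hxdef, sgn2_comb A B C D (1 - lam) lam (by ring), ← hsC, ← hsD, hlam]
    field_simp
    ring
  -- coordinates
  set v1 := B.1 - A.1
  set v2 := B.2 - A.2
  set w1 := x.1 - A.1
  set w2 := x.2 - A.2
  have hcross : v1 * w2 - v2 * w1 = 0 := by
    have : sgn2 A B x = v1 * w2 - v2 * w1 := by simp [sgn2]; rfl
    linarith [hsx, this.symm.trans hsx]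
  have hv12 : ¬ (v1 = 0 ∧ v2 = 0) := by
    rintro ⟨e1, e2⟩
    exact hAB (Prod.ext (by simp only [v1] at e1; linarith) (by simp only [v2] at e2; linarith))
  have hv : 0 < v1 ^ 2 + v2 ^ 2 := by
    rcases eq_or_ne v1 0 with h1' | h1'
    · have h2' : v2 ≠ 0 := fun hh => hv12 ⟨h1', hh⟩
      nlinarith [sq_nonneg v1, sq_pos_of_ne_zero h2']
    · nlinarith [sq_nonneg v2, sq_pos_of_ne_zero h1']
  set μ : ℝ := (w1 * v1 + w2 * v2) / (v1 ^ 2 + v2 ^ 2) with hmu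
  have hw1 : w1 = μ * v1 := by
    rw [hmu]; field_simp; linear_combination (-v2) * hcross
  have hw2 : w2 = μ * v2 := by
    rw [hmu]; field_simp; linear_combination v1 * hcross
  have hxAB : x = (1 - μ) • A + μ • B := by
    apply Prod.ext
    · simp only [Prod.fst_add, Prod.smul_fst, smul_eq_mul]
      have : x.1 - A.1 = μ * (B.1 - A.1) := hw1
      linarith
    · simp only [Prod.snd_add, Prod.smul_snd, smul_eq_mul]
      have : x.2 - A.2 = μ * (B.2 - A.2) := hw2
      linarith
  have htx : sgn2 C D x = 0 := by
    rw [hxdef, sgn2_comb C D C D (1 - lam) lam (by ring), sgn2_self_left, sgn2_self_right]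
    ring
  have htx' : (1 - μ) * sgn2 C D A + μ * sgn2 C D B = 0 := by
    rw [← sgn2_comb C D A B (1 - μ) μ (by ring), ← hxAB, htx]
  have hμ : 0 < μ ∧ μ < 1 := by
    rcases mul_neg_iff.mp h2 with ⟨hp, hq⟩ | ⟨hp, hq⟩ <;> constructor <;> nlinarith
  exact ⟨x, ⟨1 - μ, μ, by linarith [hμ.2], hμ.1, by ring, hxAB.symm⟩, hxCD⟩


def gg (k : ℕ) : ℕ := if k % 2 = 0 then k + 1 else k - 1

noncomputable def cnt (n : ℕ) : ℕ :=
  ((range n ×ˢ range n).filter fun q => q.1 < q.2 ∧ gg q.1 < gg q.2).card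

lemma gg_lt {n k : ℕ} (hn : n % 2 = 0) (h : k < n) : gg k < n := by
  unfold gg; split_ifs <;> omega

lemma gg_even {n : ℕ} (hn : n % 2 = 0) : gg n = n + 1 := by simp [gg, hn]

lemma gg_odd {n : ℕ} (hn : n % 2 = 0) : gg (n + 1) = n := by
  have h : (n + 1) % 2 = 1 := by omega
  simp [gg, h]

lemma gg_inj {i j : ℕ} (h : gg i = gg j) : i = j := by
  unfold gg at h; split_ifs at h <;> omega

lemma cnt_zero : cnt 0 = 0 := by simp [cnt]

lemma cnt_step (n : ℕ) (hn : n % 2 = 0) : cnt (n + 2) = cnt n + 2 * n := by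
  classical
  have h1 : ((range (n+2) ×ˢ range (n+2)).filter fun q => q.1 < q.2 ∧ gg q.1 < gg q.2)
      = (((range n ×ˢ range n).filter fun q => q.1 < q.2 ∧ gg q.1 < gg q.2)
        ∪ ((range n).image fun i => (i, n)))
        ∪ ((range n).image fun i => (i, n+1)) := by
    ext ⟨i, j⟩
    simp only [mem_filter, mem_product, mem_range, mem_union, mem_image, Prod.mk.injEq]
    constructor
    · rintro ⟨⟨hi, hj⟩, hij, hg⟩
      by_cases hjn : j < n
      · exact Or.inl (Or.inl ⟨⟨by omega, hjn⟩, hij, hg⟩)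
      · rcases (by omega : j = n ∨ j = n + 1) with rfl | rfl
        · exact Or.inl (Or.inr ⟨i, by omega, rfl, rfl⟩)
        · have hin : i < n := by
            rcases (by omega : i < n ∨ i = n) with h | rfl
            · exact h
            · rw [gg_even hn, gg_odd hn] at hg; omega
          exact Or.inr ⟨i, hin, rfl, rfl⟩
    · rintro ((⟨⟨hi, hj⟩, hij, hg⟩ | ⟨a, ha, rfl, rfl⟩) | ⟨a, ha, rfl, rfl⟩)
      · exact ⟨⟨by omega, by omega⟩, hij, hg⟩
      · refine ⟨⟨by omega, by omega⟩, by omega, ?_⟩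
        rw [gg_even hn]
        have := gg_lt hn ha; omega
      · refine ⟨⟨by omega, by omega⟩, by omega, ?_⟩
        rw [gg_odd hn]
        exact gg_lt hn ha
  have hinj1 : Function.Injective (fun i : ℕ => (i, n)) := fun a b h => (Prod.mk.injEq _ _ _ _ ▸ h).1
  have hinj2 : Function.Injective (fun i : ℕ => (i, n+1)) := fun a b h => (Prod.mk.injEq _ _ _ _ ▸ h).1
  have hd1 : Disjoint
      (((range n ×ˢ range n).filter fun q => q.1 < q.2 ∧ gg q.1 < gg q.2))
      ((range n).image fun i => (i, n)) := by
    rw [Finset.disjoint_left]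
    rintro ⟨i, j⟩ h1 h2
    simp only [mem_filter, mem_product, mem_range] at h1
    simp only [mem_image, mem_range, Prod.mk.injEq] at h2
    obtain ⟨a, ha, rfl, rfl⟩ := h2
    omega
  have hd2 : Disjoint
      ((((range n ×ˢ range n).filter fun q => q.1 < q.2 ∧ gg q.1 < gg q.2)
        ∪ ((range n).image fun i => (i, n))))
      ((range n).image fun i => (i, n+1)) := by
    rw [Finset.disjoint_left]
    rintro ⟨i, j⟩ h1 h2
    simp only [mem_union, mem_filter, mem_product, mem_range, mem_image, Prod.mk.injEq] at h1 h2
    obtain ⟨a, ha, rfl, rfl⟩ := h2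
    rcases h1 with ⟨⟨_, h⟩, _⟩ | ⟨b, hb, _, h⟩ <;> omega
  rw [cnt, h1, Finset.card_union_of_disjoint hd2, Finset.card_union_of_disjoint hd1,
    Finset.card_image_of_injective _ hinj1, Finset.card_image_of_injective _ hinj2,
    Finset.card_range]
  show cnt n + n + n = cnt n + 2 * n
  omega

lemma cnt_val (m : ℕ) : cnt (2 * m) + 2 * m = 2 * (m * m) := by
  induction m with
  | zero => simp [cnt_zero]
  | succ k ih =>
      have h := cnt_step (2 * k) (by omega)
      have h2 : 2 * (k + 1) = 2 * k + 2 := by ring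
      have hexp : (k + 1) * (k + 1) = k * k + 2 * k + 1 := by ring
      rw [h2, h, hexp]
      omega



def FF (n k : ℕ) : ℕ :=
  if k < n then (if Even k then k + n + 1 else k + n - 1)
  else (if Even (k - n) then k - n + 1 else k - n - 1)

lemma FF_lt {n k : ℕ} (hn : n % 2 = 0) (hk : k < 2 * n) : FF n k < 2 * n := by
  unfold FF
  split_ifs with h1 h2 h2 <;> rw [Nat.even_iff] at * <;> omega

lemma FF_big {n k : ℕ} (hn : n % 2 = 0) (hk : k < 2 * n) (h : k < n) :
    FF n k = n + gg k := by
  unfold FF gg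
  rw [if_pos h]
  split_ifs with h1 h2 h2 <;> rw [Nat.even_iff] at h1 <;> omega

lemma FF_small {n k : ℕ} (hn : n % 2 = 0) (hk : k < 2 * n) (h : n ≤ k) :
    FF n k < n := by
  unfold FF
  rw [if_neg (by omega)]
  split_ifs with h1 <;> rw [Nat.even_iff] at * <;> omega

lemma FF_invol {n k : ℕ} (hn : n % 2 = 0) (hk : k < 2 * n) : FF n (FF n k) = k := by
  rcases Nat.lt_or_ge k n with h | h
  · rcases Nat.even_or_odd k with he | ho
    · have hke : k % 2 = 0 := Nat.even_iff.mp he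
      have e1 : FF n k = k + n + 1 := by simp only [FF, if_pos h, if_pos he]
      rw [e1]
      have h2 : ¬ (k + n + 1 < n) := by omega
      have h3 : ¬ Even (k + n + 1 - n) := by rw [Nat.even_iff]; omega
      simp only [FF, if_neg h2, if_neg h3]
      omega
    · have hko : k % 2 = 1 := Nat.odd_iff.mp ho
      have hne : ¬ Even k := by rw [Nat.even_iff]; omega
      have e1 : FF n k = k + n - 1 := by simp only [FF, if_pos h, if_neg hne]
      rw [e1]
      have h2 : ¬ (k + n - 1 < n) := by omega
      have h3 : Even (k + n - 1 - n) := by rw [Nat.even_iff]; omega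
      simp only [FF, if_neg h2, if_pos h3]
      omega
  · rcases Nat.even_or_odd (k - n) with he | ho
    · have hke : (k - n) % 2 = 0 := Nat.even_iff.mp he
      have hlt : ¬ k < n := by omega
      have e1 : FF n k = k - n + 1 := by simp only [FF, if_neg hlt, if_pos he]
      rw [e1]
      have h2 : k - n + 1 < n := by omega
      have h3 : ¬ Even (k - n + 1) := by rw [Nat.even_iff]; omega
      simp only [FF, if_pos h2, if_neg h3]
      omega
    · have hko : (k - n) % 2 = 1 := Nat.odd_iff.mp ho
      have hlt : ¬ k < n := by omega
      have hne : ¬ Even (k - n) := by rw [Nat.even_iff]; omega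
      have e1 : FF n k = k - n - 1 := by simp only [FF, if_neg hlt, if_neg hne]
      rw [e1]
      have h2 : k - n - 1 < n := by omega
      have h3 : Even (k - n - 1) := by rw [Nat.even_iff]; omega
      simp only [FF, if_pos h2, if_pos h3]
      omega

lemma FF_ne {n k : ℕ} (hn : n % 2 = 0) (hk : k < 2 * n) : FF n k ≠ k := by
  unfold FF
  split_ifs with h1 h2 h2 <;> rw [Nat.even_iff] at * <;> omega

lemma FF_parity {n k : ℕ} (hn : n % 2 = 0) (hk : k < 2 * n) : FF n k % 2 ≠ k % 2 := by
  unfold FF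
  split_ifs with h1 h2 h2 <;> rw [Nat.even_iff] at * <;> omega

end Stmt9Aux

/-- For even `n` and an alternately colored bichromatic convex point set,
the matching pairing `p i` with `p (i+n+1)` for even `i < n` and `p i` with
`p (i+n−1)` for odd `i < n` is a bichromatic perfect matching with exactly
`n(n−2)/2` crossings. -/
theorem stmt9 (n : ℕ) (hn : Even n)
    (p : Fin (2 * n) → ℝ × ℝ) (c : Fin (2 * n) → Bool)
    (hconv : ConvexCW (2 * n) p) (hcol : Bichrom n c) (halt : Alternating (2 * n) c) :
    ∃ f : Fin (2 * n) → Fin (2 * n),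
      (∀ l : Fin (2 * n), (f l : ℕ) =
        if (l : ℕ) < n then
          (if Even (l : ℕ) then (l : ℕ) + n + 1 else (l : ℕ) + n - 1)
        else
          (if Even ((l : ℕ) - n) then (l : ℕ) - n + 1 else (l : ℕ) - n - 1)) ∧
      IsBPM (2 * n) c f ∧ crNum (2 * n) p f = n * (n - 2) / 2 := by

  have hn2 : n % 2 = 0 := Nat.even_iff.mp hn
  set f : Fin (2 * n) → Fin (2 * n) := fun l => ⟨FF n l.val, FF_lt hn2 l.isLt⟩ with hf
  have hfv : ∀ l : Fin (2 * n), (f l : ℕ) = FF n l.val := fun l => rfl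
  refine ⟨f, fun l => rfl, ⟨?_, ?_, ?_⟩, ?_⟩
  · -- involutive
    intro l
    apply Fin.ext
    rw [hfv, hfv]
    exact FF_invol hn2 l.isLt
  · -- fixed-point free
    intro l h
    exact FF_ne hn2 l.isLt (congrArg Fin.val h)
  · -- bichromatic
    intro l
    have h0 : 0 < 2 * n := l.pos
    have haux : ∀ k (hk : k < 2 * n),
        c ⟨k, hk⟩ = if k % 2 = 0 then c ⟨0, h0⟩ else !(c ⟨0, h0⟩) := by
      intro k
      induction k with
      | zero => intro hk; simp
      | succ j ih =>
          intro hk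
          have hj : j < 2 * n := by omega
          have hne := halt ⟨j, hj⟩ ⟨j + 1, hk⟩ (by simp [Nat.mod_eq_of_lt hk])
          rw [ih hj] at hne
          by_cases hp : j % 2 = 0
          · have hp1 : ¬ ((j + 1) % 2 = 0) := by omega
            rw [if_pos hp] at hne
            rw [if_neg hp1]
            cases hc0 : c ⟨0, h0⟩ <;> cases hcj : c ⟨j + 1, hk⟩ <;> simp_all
          · have hp1 : (j + 1) % 2 = 0 := by omega
            rw [if_neg hp] at hne
            rw [if_pos hp1]
            cases hc0 : c ⟨0, h0⟩ <;> cases hcj : c ⟨j + 1, hk⟩ <;> simp_all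
    have e1 : c (f l) = if (f l : ℕ) % 2 = 0 then c ⟨0, h0⟩ else !(c ⟨0, h0⟩) := by
      have := haux (f l : ℕ) (f l).isLt
      rwa [Fin.eta] at this
    have e2 : c l = if (l : ℕ) % 2 = 0 then c ⟨0, h0⟩ else !(c ⟨0, h0⟩) := by
      have := haux (l : ℕ) l.isLt
      rwa [Fin.eta] at this
    have hp := FF_parity hn2 l.isLt
    rw [e1, e2, hfv]
    by_cases hq : (l : ℕ) % 2 = 0
    · rw [if_pos hq, if_neg (by omega)]
      cases c ⟨0, h0⟩ <;> simp
    · rw [if_neg hq, if_pos (by omega)]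
      cases c ⟨0, h0⟩ <;> simp
  · -- crossing number
    have hside_in : ∀ i j k : Fin (2 * n), (i : ℕ) < (k : ℕ) → (k : ℕ) < (j : ℕ) →
        0 < sgn2 (p i) (p j) (p k) := by
      intro i j k h1 h2
      have := hconv.2 i k j h1 h2
      unfold sgn2
      linarith
    have hside_out : ∀ i j k : Fin (2 * n), (i : ℕ) < (j : ℕ) →
        ((k : ℕ) < (i : ℕ) ∨ (j : ℕ) < (k : ℕ)) → sgn2 (p i) (p j) (p k) < 0 := by
      intro i j k hij hk
      rcases hk with h | h
      · have := hconv.2 k i j h hij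
        unfold sgn2
        linarith
      · have := hconv.2 i j k hij h
        unfold sgn2
        linarith
    have hlt_iff : ∀ l : Fin (2 * n), l < f l ↔ (l : ℕ) < n := by
      intro l
      rw [Fin.lt_def, hfv]
      constructor
      · intro h
        by_contra hc2
        push_neg at hc2
        have := FF_small hn2 l.isLt hc2
        omega
      · intro h
        rw [FF_big hn2 l.isLt h]
        omega
    have key : ∀ q : Fin (2 * n) × Fin (2 * n),
        (q.1 < q.2 ∧ q.1 < f q.1 ∧ q.2 < f q.2 ∧
          SegCross (p q.1) (p (f q.1)) (p q.2) (p (f q.2)))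
        ↔ ((q.1 : ℕ) < n ∧ (q.2 : ℕ) < n ∧ (q.1 : ℕ) < (q.2 : ℕ) ∧
            gg (q.1 : ℕ) < gg (q.2 : ℕ)) := by
      intro q
      constructor
      · rintro ⟨h12, h1f, h2f, hseg⟩
        have ha : (q.1 : ℕ) < n := (hlt_iff q.1).mp h1f
        have hcc : (q.2 : ℕ) < n := (hlt_iff q.2).mp h2f
        have hb : (f q.1 : ℕ) = n + gg (q.1 : ℕ) := by
          rw [hfv]; exact FF_big hn2 q.1.isLt ha
        have hd : (f q.2 : ℕ) = n + gg (q.2 : ℕ) := by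
          rw [hfv]; exact FF_big hn2 q.2.isLt hcc
        have hac : (q.1 : ℕ) < (q.2 : ℕ) := Fin.lt_def.mp h12
        refine ⟨ha, hcc, hac, ?_⟩
        by_contra hgg
        push_neg at hgg
        have hne : gg (q.2 : ℕ) ≠ gg (q.1 : ℕ) := fun h => by
          have := gg_inj h; omega
        have s1 : 0 < sgn2 (p q.1) (p (f q.1)) (p q.2) :=
          hside_in q.1 (f q.1) q.2 (by omega) (by omega)
        have s2 : 0 < sgn2 (p q.1) (p (f q.1)) (p (f q.2)) :=
          hside_in q.1 (f q.1) (f q.2) (by omega) (by omega)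
        exact no_cross_same_side (mul_pos s1 s2) hseg
      · rintro ⟨ha, hcc, hac, hgg⟩
        have hb : (f q.1 : ℕ) = n + gg (q.1 : ℕ) := by
          rw [hfv]; exact FF_big hn2 q.1.isLt ha
        have hd : (f q.2 : ℕ) = n + gg (q.2 : ℕ) := by
          rw [hfv]; exact FF_big hn2 q.2.isLt hcc
        refine ⟨Fin.lt_def.mpr hac, (hlt_iff q.1).mpr ha, (hlt_iff q.2).mpr hcc, ?_⟩
        apply cross_of_opp
        · intro h
          have := congrArg Fin.val (hconv.1 h)
          omega
        · apply mul_neg_of_pos_of_neg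
          · exact hside_in q.1 (f q.1) q.2 (by omega) (by omega)
          · exact hside_out q.1 (f q.1) (f q.2) (by omega) (Or.inr (by omega))
        · apply mul_neg_of_neg_of_pos
          · exact hside_out q.2 (f q.2) q.1 (by omega) (Or.inl (by omega))
          · exact hside_in q.2 (f q.2) (f q.1) (by omega) (by omega)
    have e1 : crNum (2 * n) p f = Nat.card {q : Fin (2 * n) × Fin (2 * n) //
        (q.1 : ℕ) < n ∧ (q.2 : ℕ) < n ∧ (q.1 : ℕ) < (q.2 : ℕ) ∧
          gg (q.1 : ℕ) < gg (q.2 : ℕ)} := by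
      unfold crNum
      exact Nat.card_congr (Equiv.subtypeEquivRight key)
    rw [e1, Nat.card_eq_fintype_card, Fintype.card_subtype]
    have e2 : (Finset.univ.filter fun q : Fin (2 * n) × Fin (2 * n) =>
        (q.1 : ℕ) < n ∧ (q.2 : ℕ) < n ∧ (q.1 : ℕ) < (q.2 : ℕ) ∧
          gg (q.1 : ℕ) < gg (q.2 : ℕ)).card = cnt n := by
      unfold cnt
      apply Finset.card_bij (fun q _ => ((q.1 : ℕ), (q.2 : ℕ)))
      · intro a ha
        simp only [mem_filter, mem_univ, true_and] at ha
        simp only [mem_filter, mem_product, mem_range]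
        exact ⟨⟨ha.1, ha.2.1⟩, ha.2.2.1, ha.2.2.2⟩
      · intro a ha b hb h
        simp only [Prod.mk.injEq] at h
        exact Prod.ext (Fin.ext h.1) (Fin.ext h.2)
      · rintro ⟨x, y⟩ hb
        simp only [mem_filter, mem_product, mem_range] at hb
        refine ⟨(⟨x, by omega⟩, ⟨y, by omega⟩), ?_, rfl⟩
        simp only [mem_filter, mem_univ, true_and]
        exact ⟨hb.1.1, hb.1.2, hb.2.1, hb.2.2⟩
    rw [e2]
    obtain ⟨m, hm⟩ := hn
    have hm2 : n = 2 * m := by omega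
    have hc := cnt_val m
    rw [← hm2] at hc
    have hnn : n * (n - 2) = 4 * (m * m) - 4 * m := by
      rcases Nat.eq_zero_or_pos m with rfl | hpos
      · simp [hm2]
      · have h1 : n - 2 = 2 * m - 2 := by omega
        have h2 : n * (n - 2) = 2 * m * (2 * m - 2) := by rw [hm2]
        obtain ⟨m', rfl⟩ : ∃ m', m = m' + 1 := ⟨m - 1, by omega⟩
        have h3 : 2 * (m' + 1) - 2 = 2 * m' := by omega
        rw [h2, h3]
        have e : (m' + 1) * (m' + 1) = m' * m' + 2 * m' + 1 := by ring
        have e2' : 2 * (m' + 1) * (2 * m') = 4 * (m' * m') + 4 * m' := by ring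
        omega
    generalize hL : n * (n - 2) = L at hnn ⊢
    generalize hM : m * m = M at hc hnn
    omega
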